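/- Let κ = 1/√5, a₀ = (√5-1)/2, b₀ = (1+√5)/2, c₀ = 1, and define g(x) = κ(a₀/(a₀²+x²) + b₀/(b₀²+x²)) - c₀/(c₀²+x²). Then g(x) ≤ 0 for all real x. -/

import Mathlib

theorem stmt_1 (x : ℝ) :
    (1 / Real.sqrt 5) *
        ((Real.sqrt 5 - 1) / 2 / (((Real.sqrt 5 - 1) / 2) ^ 2 + x ^ 2) +
          (1 + Real.sqrt 5) / 2 / (((1 + Real.sqrt 5) / 2) ^ 2 + x ^ 2)) -
      1 / (1 + x ^ 2) ≤ 0 := by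
  have hs : Real.sqrt 5 ^ 2 = 5 := Real.sq_sqrt (by norm_num)
  have hs2 : Real.sqrt 5 > 2 := by nlinarith [Real.sqrt_nonneg 5]
  have h1 : ((Real.sqrt 5 - 1) / 2) ^ 2 + x ^ 2 > 0 := by nlinarith [sq_nonneg x]
  have h2 : ((1 + Real.sqrt 5) / 2) ^ 2 + x ^ 2 > 0 := by positivity
  have h3 : (1 : ℝ) + x ^ 2 > 0 := by positivity
  have hs3 : Real.sqrt 5 ^ 3 = 5 * Real.sqrt 5 := by rw [pow_succ, hs]
  have hs4 : Real.sqrt 5 ^ 4 = 25 := by nlinarith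
  rw [sub_nonpos, div_add_div _ _ (ne_of_gt h1) (ne_of_gt h2), div_mul_div_comm, one_mul,
    div_le_div_iff₀ (by positivity) h3]
  nlinarith [hs, hs3, hs4, mul_nonneg (Real.sqrt_nonneg 5) (sq_nonneg x), mul_nonneg (Real.sqrt_nonneg 5) (sq_nonneg (x^2))]
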